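/- Correctness of the reduction (equivalence): the constructed job system admits a feasible schedule if and only if there exists a partition of the index set {1, …, 3n} into n subsets A_1, …, A_n with ∑_{i ∈ A_k} x_i = M for every k (equivalently, a 3-Partition of x_1, …, x_{3n}). This equivalence is the core of the proof that the multi-cluster SRT-WiFi network scheduling problem with rate adaptation (MSNS-RA) is NP-hard in the strong sense. -/
import Mathlib

open Set MeasureTheory
open scoped ENNReal NNReal

private lemma ico_disj {a b c d : ℝ} (h : b ≤ c) :
    Disjoint (Set.Ico a b) (Set.Ico c d) := by
  apply Set.disjoint_left.2
  rintro t ⟨_, htb⟩ ⟨hct, _⟩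
  linarith

/-- Release times of the constructed job system: blocker `k` is released at
`2kM`, every partition job at `0`. -/
noncomputable def rel (n M : ℕ) : Fin n ⊕ Fin (3 * n) → ℝ :=
  Sum.elim (fun k => ((2 * (k : ℕ) * M : ℕ) : ℝ)) (fun _ => 0)

/-- Deadlines of the constructed job system: blocker `k` has deadline
`(2k+1)M`, every partition job has deadline `2nM`. -/
noncomputable def dl (n M : ℕ) : Fin n ⊕ Fin (3 * n) → ℝ :=
  Sum.elim (fun k => (((2 * (k : ℕ) + 1) * M : ℕ) : ℝ)) (fun _ => ((2 * n * M : ℕ) : ℝ))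

/-- Lengths of the constructed job system: every blocker has length `M`,
partition job `i` has length `x i`. -/
noncomputable def len (n M : ℕ) (x : Fin (3 * n) → ℕ) : Fin n ⊕ Fin (3 * n) → ℝ :=
  Sum.elim (fun _ => (M : ℝ)) (fun i => (x i : ℝ))

/-- A schedule (assignment of start times) of the constructed job system is
feasible if every job starts at or after its release time, finishes by its
deadline, and the execution intervals of distinct jobs are pairwise
disjoint. -/
def Feasible (n M : ℕ) (x : Fin (3 * n) → ℕ)
    (sched : Fin n ⊕ Fin (3 * n) → ℝ) : Prop :=
  (∀ j, rel n M j ≤ sched j) ∧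
  (∀ j, sched j + len n M x j ≤ dl n M j) ∧
  (∀ j k, j ≠ k →
    Disjoint (Set.Ico (sched j) (sched j + len n M x j))
             (Set.Ico (sched k) (sched k + len n M x k)))

/-- **Correctness of the reduction (equivalence).**
The constructed job system admits a feasible schedule if and only if the
index set of the 3-Partition instance can be partitioned into `n` subsets
`A k`, each summing to `M` (i.e., the instance admits a 3-Partition).  This
equivalence is the core of the proof that MSNS-RA is NP-hard in the strong
sense. -/
theorem feasible_iff_three_partition
    (n M : ℕ) (hn : 0 < n) (hM : 0 < M)
    (x : Fin (3 * n) → ℕ) (hx : ∀ i, 0 < x i)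
    (hlow : ∀ i, M < 4 * x i) (hhigh : ∀ i, 2 * x i < M)
    (hsum : ∑ i, x i = n * M) :
    (∃ sched : Fin n ⊕ Fin (3 * n) → ℝ, Feasible n M x sched) ↔
    (∃ A : Fin n → Finset (Fin (3 * n)),
      (∀ i : Fin (3 * n), ∃! k : Fin n, i ∈ A k) ∧
      (∀ k : Fin n, ∑ i ∈ A k, x i = M)) := by
  constructor
  · rintro ⟨s, hrel, hdl, hdisj⟩
    have hMR : (0:ℝ) < M := by exact_mod_cast hM
    -- blocker start times are forced
    have hblk : ∀ k : Fin n, s (Sum.inl k) = 2 * (k:ℕ) * M := by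
      intro k
      have h1 := hrel (Sum.inl k)
      have h2 := hdl (Sum.inl k)
      simp only [rel, dl, len, Sum.elim_inl] at h1 h2
      push_cast at h1 h2
      linarith
    -- every partition job lies inside some gap
    have hK : ∀ i : Fin (3*n), ∃ k : Fin n,
        ((2*(k:ℕ)+1)*M : ℝ) ≤ s (Sum.inr i) ∧
        s (Sum.inr i) + x i ≤ (2*(k:ℕ)+2)*M := by
      intro i
      set si := s (Sum.inr i) with hsi
      have h1 : (0:ℝ) ≤ si := by
        have := hrel (Sum.inr i); simpa [rel, hsi] using this
      have h2 : si + x i ≤ 2*n*M := by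
        have := hdl (Sum.inr i)
        simp only [dl, len, Sum.elim_inr] at this
        push_cast at this; linarith
      have hxiR : (0:ℝ) < x i := by exact_mod_cast hx i
      have hsilt : si < 2*n*M := by linarith
      set m := ⌊si / M⌋₊ with hm
      have hdiv0 : 0 ≤ si / M := div_nonneg h1 hMR.le
      have hfl : (m:ℝ) * M ≤ si := by
        have h := Nat.floor_le hdiv0
        calc (m:ℝ)*M ≤ (si/M)*M := by nlinarith
        _ = si := div_mul_cancel₀ si hMR.ne'
      have hfl2 : si < ((m:ℝ)+1)*M := by
        have h := Nat.lt_floor_add_one (si / M)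
        calc si = (si/M)*M := (div_mul_cancel₀ si hMR.ne').symm
        _ < ((m:ℝ)+1)*M := by nlinarith
      have hm2n : m < 2*n := by
        by_contra hcon
        push_neg at hcon
        have h3 : (2*(n:ℝ)) ≤ m := by exact_mod_cast hcon
        nlinarith
      have hodd : m % 2 = 1 := by
        rcases Nat.mod_two_eq_zero_or_one m with h0 | h1'
        · exfalso
          obtain ⟨k, hk⟩ : ∃ k, m = 2*k := ⟨m/2, by omega⟩
          have hkn : k < n := by omega
          have hmr : (m:ℝ) = 2*(k:ℝ) := by rw [hk]; push_cast; ring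
          have hd := hdisj (Sum.inl ⟨k, hkn⟩) (Sum.inr i) (by simp)
          rw [Set.disjoint_left] at hd
          refine hd (a := si) ?_ ?_
          · simp only [len, Sum.elim_inl]
            rw [hblk ⟨k, hkn⟩]
            simp only [Fin.val_mk]
            have hmm : (m:ℝ)*M = 2*(k:ℝ)*M := by rw [hmr]
            have hexp : ((m:ℝ)+1)*M = (m:ℝ)*M + M := by ring
            exact ⟨by linarith, by linarith⟩
          · simp only [len, Sum.elim_inr]
            exact ⟨le_refl si, by linarith⟩
        · exact h1'
      obtain ⟨k, hk⟩ : ∃ k, m = 2*k+1 := ⟨m/2, by omega⟩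
      have hkn : k < n := by omega
      have hmr : (m:ℝ) = 2*(k:ℝ)+1 := by rw [hk]; push_cast; ring
      refine ⟨⟨k, hkn⟩, ?_, ?_⟩
      · simp only [Fin.val_mk]
        rw [show (2*(k:ℝ)+1)*M = (m:ℝ)*M by rw [hmr]]
        exact hfl
      · simp only [Fin.val_mk]
        by_contra hcon
        push_neg at hcon
        have hsiub : si < (2*(k:ℝ)+2)*M := by nlinarith [hmr]
        rcases lt_or_eq_of_le (show k+1 ≤ n by omega) with hk1 | hk1
        · -- the point (2k+2)M lies in blocker k+1 and in the job
          have hd := hdisj (Sum.inr i) (Sum.inl ⟨k+1, hk1⟩) (by simp)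
          rw [Set.disjoint_left] at hd
          refine hd (a := (2*(k:ℝ)+2)*M) ?_ ?_
          · simp only [len, Sum.elim_inr]
            exact ⟨le_of_lt hsiub, hcon⟩
          · simp only [len, Sum.elim_inl]
            rw [hblk ⟨k+1, hk1⟩]
            simp only [Fin.val_mk]
            constructor
            · push_cast; nlinarith
            · push_cast; nlinarith
        · -- k+1 = n : deadline contradiction
          have : si + x i ≤ (2*(k:ℝ)+2)*M := by
            rw [show (2*(k:ℝ)+2)*M = 2*(n:ℝ)*M by rw [← hk1]; push_cast; ring]
            exact h2
          linarith
    choose K hK1 hK2 using hK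
    refine ⟨fun k => Finset.univ.filter (fun i => K i = k), ?_, ?_⟩
    · intro i
      refine ⟨K i, by simp, fun y hy => ?_⟩
      simp only [Finset.mem_filter, Finset.mem_univ, true_and] at hy
      exact hy.symm
    · -- each gap receives total length ≤ M, hence exactly M
      have hTle : ∀ k : Fin n,
          (∑ i ∈ Finset.univ.filter (fun i => K i = k), x i) ≤ M := by
        intro k
        set Ak := Finset.univ.filter (fun i => K i = k) with hAk
        have hsub : ∀ i ∈ Ak,
            Set.Ico (s (Sum.inr i)) (s (Sum.inr i) + x i) ⊆
              Set.Ico ((2*(k:ℕ)+1)*M : ℝ) ((2*(k:ℕ)+2)*M) := by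
          intro i hi
          simp only [hAk, Finset.mem_filter, Finset.mem_univ, true_and] at hi
          exact Set.Ico_subset_Ico (by rw [← hi]; exact hK1 i) (by rw [← hi]; exact hK2 i)
        have hpair : (↑Ak : Set (Fin (3*n))).PairwiseDisjoint
            (fun i => Set.Ico (s (Sum.inr i)) (s (Sum.inr i) + (x i : ℝ))) := by
          intro i _ j _ hij
          have := hdisj (Sum.inr i) (Sum.inr j) (by simpa using hij)
          simpa [len] using this
        have hvol := measure_biUnion_finset (μ := volume) hpair
          (fun i _ => measurableSet_Ico)
        have hcalc : ((∑ i ∈ Ak, x i : ℕ) : ℝ≥0∞) ≤ ((M:ℕ) : ℝ≥0∞) := by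
          calc ((∑ i ∈ Ak, x i : ℕ) : ℝ≥0∞)
              = ∑ i ∈ Ak, ((x i : ℕ) : ℝ≥0∞) := by push_cast; rfl
            _ = ∑ i ∈ Ak, volume (Set.Ico (s (Sum.inr i)) (s (Sum.inr i) + (x i : ℝ))) := by
                refine Finset.sum_congr rfl fun i _ => ?_
                rw [Real.volume_Ico, add_sub_cancel_left, ENNReal.ofReal_natCast]
            _ = volume (⋃ i ∈ Ak, Set.Ico (s (Sum.inr i)) (s (Sum.inr i) + (x i : ℝ))) :=
                hvol.symm
            _ ≤ volume (Set.Ico ((2*(k:ℕ)+1)*M : ℝ) ((2*(k:ℕ)+2)*M)) := by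
                refine measure_mono (Set.iUnion₂_subset ?_)
                exact hsub
            _ = ((M:ℕ) : ℝ≥0∞) := by
                rw [Real.volume_Ico,
                  show (2*(k:ℕ)+2)*(M:ℝ) - (2*(k:ℕ)+1)*M = ((M:ℕ):ℝ) by push_cast; ring,
                  ENNReal.ofReal_natCast]
        exact_mod_cast hcalc
      have hTsum : ∑ k : Fin n, ∑ i ∈ Finset.univ.filter (fun i => K i = k), x i
          = n * M := by
        rw [← hsum]
        exact Finset.sum_fiberwise _ _ _
      intro k
      by_contra hne
      have hlt : ∑ i ∈ Finset.univ.filter (fun i => K i = k), x i < M :=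
        lt_of_le_of_ne (hTle k) hne
      have : ∑ k : Fin n, ∑ i ∈ Finset.univ.filter (fun i => K i = k), x i
          < ∑ _k : Fin n, M := by
        exact Finset.sum_lt_sum (fun j _ => hTle j) ⟨k, Finset.mem_univ k, hlt⟩
      simp only [Finset.sum_const, Finset.card_univ, Fintype.card_fin, smul_eq_mul] at this
      omega
  · rintro ⟨A, hmem, hsumA⟩
    have hK' : ∀ i : Fin (3*n), ∃ k, i ∈ A k ∧ ∀ y, i ∈ A y → y = k := hmem
    choose K hK1 hK2 using hK'
    set off : Fin (3*n) → ℕ :=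
      fun i => ∑ j ∈ (A (K i)).filter (fun j => j < i), x j with hoff
    have key1 : ∀ i, off i + x i ≤ M := by
      intro i
      have hnotmem : i ∉ (A (K i)).filter (fun j => j < i) := by
        simp [Finset.mem_filter]
      have hins : insert i ((A (K i)).filter (fun j => j < i)) ⊆ A (K i) := by
        intro j hj
        rcases Finset.mem_insert.1 hj with h | h
        · rw [h]; exact hK1 i
        · exact (Finset.mem_filter.1 h).1
      calc off i + x i
          = ∑ j ∈ insert i ((A (K i)).filter (fun j => j < i)), x j := by
            rw [Finset.sum_insert hnotmem]; ring
        _ ≤ ∑ j ∈ A (K i), x j := Finset.sum_le_sum_of_subset hins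
        _ = M := hsumA (K i)
    have key2 : ∀ i i', K i = K i' → i < i' → off i + x i ≤ off i' := by
      intro i i' he hlt
      have hnotmem : i ∉ (A (K i)).filter (fun j => j < i) := by
        simp [Finset.mem_filter]
      have hins : insert i ((A (K i)).filter (fun j => j < i)) ⊆
          (A (K i')).filter (fun j => j < i') := by
        intro j hj
        rcases Finset.mem_insert.1 hj with h | h
        · rw [h]
          exact Finset.mem_filter.2 ⟨he ▸ hK1 i, hlt⟩
        · obtain ⟨hj1, hj2⟩ := Finset.mem_filter.1 h
          exact Finset.mem_filter.2 ⟨he ▸ hj1, hj2.trans hlt⟩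
      calc off i + x i
          = ∑ j ∈ insert i ((A (K i)).filter (fun j => j < i)), x j := by
            rw [Finset.sum_insert hnotmem]; ring
        _ ≤ ∑ j ∈ (A (K i')).filter (fun j => j < i'), x j :=
            Finset.sum_le_sum_of_subset hins
        _ = off i' := rfl
    refine ⟨Sum.elim (fun k => ((2*(k:ℕ)*M : ℕ) : ℝ))
        (fun i => (((2*(K i : ℕ)+1)*M + off i : ℕ) : ℝ)), ?_, ?_, ?_⟩
    · intro j
      rcases j with k | i
      · simp [rel]
      · simp only [rel, Sum.elim_inr]
        positivity
    · intro j
      rcases j with k | i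
      · simp only [dl, len, Sum.elim_inl]
        push_cast
        nlinarith
      · simp only [dl, len, Sum.elim_inr]
        have hKn : (K i : ℕ) < n := (K i).isLt
        have hnat : (2*(K i : ℕ)+1)*M + off i + x i ≤ 2*n*M := by
          have h1 := key1 i
          calc (2*(K i : ℕ)+1)*M + off i + x i
              ≤ (2*(K i : ℕ)+1)*M + M := by omega
            _ = (2*(K i : ℕ)+2)*M := by ring
            _ ≤ 2*n*M := Nat.mul_le_mul (by omega) (le_refl M)
        exact_mod_cast hnat
    · -- disjointness
      have hbp : ∀ (k : Fin n) (i : Fin (3*n)),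
          Disjoint
            (Set.Ico (((2*(k:ℕ)*M : ℕ):ℝ)) (((2*(k:ℕ)*M : ℕ):ℝ) + (M:ℝ)))
            (Set.Ico ((((2*(K i : ℕ)+1)*M + off i : ℕ):ℝ))
              ((((2*(K i : ℕ)+1)*M + off i : ℕ):ℝ) + (x i : ℝ))) := by
        intro k i
        rcases le_or_gt (k:ℕ) (K i : ℕ) with h | h
        · apply ico_disj
          have hnat : 2*(k:ℕ)*M + M ≤ (2*(K i : ℕ)+1)*M + off i := by
            have : (2*(k:ℕ)+1)*M ≤ (2*(K i : ℕ)+1)*M :=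
              Nat.mul_le_mul (by omega) (le_refl M)
            calc 2*(k:ℕ)*M + M = (2*(k:ℕ)+1)*M := by ring
              _ ≤ (2*(K i : ℕ)+1)*M := this
              _ ≤ (2*(K i : ℕ)+1)*M + off i := Nat.le_add_right _ _
          exact_mod_cast hnat
        · apply Disjoint.symm
          apply ico_disj
          have hnat : (2*(K i : ℕ)+1)*M + off i + x i ≤ 2*(k:ℕ)*M := by
            have h1 := key1 i
            calc (2*(K i : ℕ)+1)*M + off i + x i
                ≤ (2*(K i : ℕ)+1)*M + M := by omega
              _ = (2*(K i : ℕ)+2)*M := by ring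
              _ ≤ 2*(k:ℕ)*M := Nat.mul_le_mul (by omega) (le_refl M)
          exact_mod_cast hnat
      have hpp : ∀ (i i' : Fin (3*n)), i ≠ i' →
          Disjoint
            (Set.Ico ((((2*(K i : ℕ)+1)*M + off i : ℕ):ℝ))
              ((((2*(K i : ℕ)+1)*M + off i : ℕ):ℝ) + (x i : ℝ)))
            (Set.Ico ((((2*(K i' : ℕ)+1)*M + off i' : ℕ):ℝ))
              ((((2*(K i' : ℕ)+1)*M + off i' : ℕ):ℝ) + (x i' : ℝ))) := by
        have main : ∀ (i i' : Fin (3*n)),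
            ((K i : ℕ) < (K i : ℕ) + 0 ∨ True) → (K i = K i' → i < i') →
            ((K i : ℕ) ≤ (K i' : ℕ)) →
            (2*(K i : ℕ)+1)*M + off i + x i ≤ (2*(K i' : ℕ)+1)*M + off i' := by
          intro i i' _ hord hle
          rcases eq_or_lt_of_le hle with heq | hlt
          · have he : K i = K i' := Fin.ext heq
            have h2 := key2 i i' he (hord he)
            rw [he] at *
            omega
          · have h1 := key1 i
            calc (2*(K i : ℕ)+1)*M + off i + x i
                ≤ (2*(K i : ℕ)+1)*M + M := by omega
              _ = (2*(K i : ℕ)+2)*M := by ring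
              _ ≤ (2*(K i' : ℕ)+1)*M := Nat.mul_le_mul (by omega) (le_refl M)
              _ ≤ (2*(K i' : ℕ)+1)*M + off i' := Nat.le_add_right _ _
        intro i i' hne
        by_cases he : K i = K i'
        · rcases lt_or_gt_of_ne hne with hlt | hlt
          · apply ico_disj
            have hnat := main i i' (Or.inr trivial) (fun _ => hlt) (le_of_eq (by rw [he]))
            exact_mod_cast hnat
          · apply Disjoint.symm
            apply ico_disj
            have hnat := main i' i (Or.inr trivial) (fun _ => hlt) (le_of_eq (by rw [he]))
            exact_mod_cast hnat
        · rcases lt_or_gt_of_ne (fun hc => he (Fin.ext hc) : (K i : ℕ) ≠ (K i' : ℕ)) with hlt | hlt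
          · apply ico_disj
            have hnat := main i i' (Or.inr trivial) (fun hc => absurd hc he) (le_of_lt hlt)
            exact_mod_cast hnat
          · apply Disjoint.symm
            apply ico_disj
            have hnat := main i' i (Or.inr trivial) (fun hc => absurd hc (Ne.symm he)) (le_of_lt hlt)
            exact_mod_cast hnat
      intro j j' hne
      rcases j with k | i <;> rcases j' with k' | i'
      · -- blocker vs blocker
        simp only [len, Sum.elim_inl]
        have hkk : (k:ℕ) ≠ (k':ℕ) := fun hc => hne (by rw [Fin.ext hc])
        rcases lt_or_gt_of_ne hkk with h | h
        · apply ico_disj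
          have hnat : 2*(k:ℕ)*M + M ≤ 2*(k':ℕ)*M := by
            calc 2*(k:ℕ)*M + M = (2*(k:ℕ)+1)*M := by ring
              _ ≤ 2*(k':ℕ)*M := Nat.mul_le_mul (by omega) (le_refl M)
          exact_mod_cast hnat
        · apply Disjoint.symm
          apply ico_disj
          have hnat : 2*(k':ℕ)*M + M ≤ 2*(k:ℕ)*M := by
            calc 2*(k':ℕ)*M + M = (2*(k':ℕ)+1)*M := by ring
              _ ≤ 2*(k:ℕ)*M := Nat.mul_le_mul (by omega) (le_refl M)
          exact_mod_cast hnat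
      · simp only [len, Sum.elim_inl, Sum.elim_inr]
        exact hbp k i'
      · simp only [len, Sum.elim_inl, Sum.elim_inr]
        exact (hbp k' i).symm
      · simp only [len, Sum.elim_inr]
        exact hpp i i' (fun hc => hne (by rw [hc]))
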